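/- Let κ be an infinite well-ordered cardinal and Z the ideal of all subsets of κ that are not cofinal in κ. Then the space S(κ, Z) = ([κ]^{<ω}, τ[Z]) is a P-space if and only if cf(κ) > ℵ₀. -/

import Mathlib

open Set

/-- The basic set `B_{x,z} = {y ∈ A : x ⊆ y ⊆ X \\ z}`. -/
def BSet {X : Type*} (A : Set (Set X)) (x z : Set X) : Set ↥A :=
  {y : ↥A | x ⊆ (y : Set X) ∧ (y : Set X) ∩ z = ∅}

/-- The topology `τ_A[Z]` on `A`, generated by the sets `B_{x,z}` for `x ∈ A`,
`z ∈ Z` with `x ∩ z = ∅`. -/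
def tau {X : Type*} (A Z : Set (Set X)) : TopologicalSpace ↥A :=
  TopologicalSpace.generateFrom
    {S | ∃ x ∈ A, ∃ z ∈ Z, x ∩ z = ∅ ∧ S = BSet A x z}

/-- A topology `t` is a P-space topology if every countable intersection of open
sets is open. -/
def IsPSpace {α : Type*} (t : TopologicalSpace α) : Prop :=
  ∀ U : ℕ → Set α, (∀ n, t.IsOpen (U n)) → t.IsOpen (⋂ n, U n)

/-- Neighborhood lemma: every open set in `tau A Z` contains a basic set
`B_{y,z}` around each of its points `y`, provided `Z` contains `∅` and is
closed under binary unions. -/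
lemma tau_nbhd {X : Type*} {A Z : Set (Set X)} (hZ0 : ∅ ∈ Z)
    (hZu : ∀ z₁ ∈ Z, ∀ z₂ ∈ Z, z₁ ∪ z₂ ∈ Z) {U : Set ↥A}
    (hU : (tau A Z).IsOpen U) :
    ∀ y ∈ U, ∃ z ∈ Z, (y : Set X) ∩ z = ∅ ∧ BSet A (y : Set X) z ⊆ U := by
  have hU' : TopologicalSpace.GenerateOpen
      {S | ∃ x ∈ A, ∃ z ∈ Z, x ∩ z = ∅ ∧ S = BSet A x z} U := hU
  clear hU
  induction hU' with
  | basic S hS =>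
    obtain ⟨x, hx, z, hz, hxz, rfl⟩ := hS
    intro y hy
    exact ⟨z, hz, hy.2, fun w hw => ⟨hy.1.trans hw.1, hw.2⟩⟩
  | univ =>
    intro y _
    exact ⟨∅, hZ0, by simp, fun _ _ => trivial⟩
  | inter s t _ _ ihs iht =>
    intro y hy
    obtain ⟨z₁, hz₁, hd₁, hs₁⟩ := ihs y hy.1
    obtain ⟨z₂, hz₂, hd₂, hs₂⟩ := iht y hy.2
    refine ⟨z₁ ∪ z₂, hZu _ hz₁ _ hz₂, by rw [inter_union_distrib_left, hd₁, hd₂, union_empty],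
      fun w hw => ⟨?_, ?_⟩⟩
    · exact hs₁ ⟨hw.1, by
        have h2 : (w : Set X) ∩ z₁ ⊆ (w : Set X) ∩ (z₁ ∪ z₂) :=
          inter_subset_inter_right _ subset_union_left
        rw [hw.2] at h2; exact subset_empty_iff.1 h2⟩
    · exact hs₂ ⟨hw.1, by
        have h2 : (w : Set X) ∩ z₂ ⊆ (w : Set X) ∩ (z₁ ∪ z₂) :=
          inter_subset_inter_right _ subset_union_right
        rw [hw.2] at h2; exact subset_empty_iff.1 h2⟩
  | sUnion S _ ih =>
    intro y hy
    obtain ⟨s, hs, hys⟩ := hy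
    obtain ⟨z, hz, hd, hsub⟩ := ih s hs y hys
    exact ⟨z, hz, hd, fun w hw => ⟨s, hs, hsub hw⟩⟩

/-- Converse: a set is open if around each point it contains a basic set. -/
lemma tau_open_of_nbhd {X : Type*} {A Z : Set (Set X)} {U : Set ↥A}
    (h : ∀ y ∈ U, ∃ z ∈ Z, (y : Set X) ∩ z = ∅ ∧ BSet A (y : Set X) z ⊆ U) :
    (tau A Z).IsOpen U := by
  have hU : U = ⋃₀ {S | ∃ y ∈ U, ∃ z ∈ Z, (y : Set X) ∩ z = ∅ ∧
      S = BSet A (y : Set X) z ∧ S ⊆ U} := by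
    ext w
    constructor
    · intro hw
      obtain ⟨z, hz, hd, hsub⟩ := h w hw
      exact ⟨_, ⟨w, hw, z, hz, hd, rfl, hsub⟩, subset_rfl, hd⟩
    · rintro ⟨S, ⟨y, hy, z, hz, hd, rfl, hsub⟩, hwS⟩
      exact hsub hwS
  rw [hU]
  exact TopologicalSpace.GenerateOpen.sUnion _ (by
    rintro S ⟨y, hy, z, hz, hd, rfl, hsub⟩
    exact TopologicalSpace.GenerateOpen.basic _ ⟨(y : Set X), y.2, z, hz, hd, rfl⟩)

/-- Theorem 5.1: for an infinite well-ordered cardinal `κ` and `Z` the ideal of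
subsets of `κ` that are not cofinal in `κ`, the space `S(κ, Z)` (finite subsets
of `κ` with the topology `τ[Z]`) is a P-space iff `cf(κ) > ℵ₀`. -/
theorem pspace_iff_uncountable_cofinality (c : Cardinal) (hc : Cardinal.aleph0 ≤ c) :
    IsPSpace (tau {s : Set {o : Ordinal // o < c.ord} | s.Finite}
        {s : Set {o : Ordinal // o < c.ord} | ¬ ∀ x, ∃ y ∈ s, x ≤ y}) ↔
      Cardinal.aleph0 < (c.ord).cof := by
  set X := {o : Ordinal // o < c.ord} with hXdef
  set A : Set (Set X) := {s | s.Finite} with hAdef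
  set Z : Set (Set X) := {s | ¬ ∀ x, ∃ y ∈ s, x ≤ y} with hZdef
  have hlim : Order.IsSuccLimit c.ord := Cardinal.isSuccLimit_ord hc
  have h0 : (0 : Ordinal) < c.ord := hlim.pos
  -- characterization of Z as the bounded sets
  have hZ : ∀ s : Set X, s ∈ Z ↔ ∃ x : X, ∀ y ∈ s, y < x := by
    intro s
    rw [hZdef]
    simp only [mem_setOf_eq, not_forall]
    constructor
    · rintro ⟨x, hx⟩
      push_neg at hx
      exact ⟨x, fun y hy => lt_of_not_ge (hx y hy)⟩
    · rintro ⟨x, hx⟩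
      exact ⟨x, by push_neg; exact hx⟩
  have hZ0 : (∅ : Set X) ∈ Z := (hZ ∅).2 ⟨⟨0, h0⟩, fun y hy => absurd hy (notMem_empty y)⟩
  have hZu : ∀ z₁ ∈ Z, ∀ z₂ ∈ Z, z₁ ∪ z₂ ∈ Z := by
    intro z₁ h₁ z₂ h₂
    obtain ⟨x₁, hx₁⟩ := (hZ z₁).1 h₁
    obtain ⟨x₂, hx₂⟩ := (hZ z₂).1 h₂
    refine (hZ _).2 ⟨max x₁ x₂, ?_⟩
    rintro y (hy | hy)
    · exact lt_of_lt_of_le (hx₁ y hy) (le_max_left _ _)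
    · exact lt_of_lt_of_le (hx₂ y hy) (le_max_right _ _)
  constructor
  · -- P-space → ℵ₀ < cof
    intro hP
    by_contra hcof
    push_neg at hcof
    have hcofeq : (c.ord).cof = Cardinal.aleph0 :=
      le_antisymm hcof (Ordinal.aleph0_le_cof.2 hlim)
    -- a countable cofinal sequence
    obtain ⟨ι, f, hlsub, hcard⟩ := Ordinal.exists_lsub_cof c.ord
    rw [hcofeq] at hcard
    obtain ⟨d⟩ := Cardinal.denumerable_iff.2 hcard
    set e := @Denumerable.eqv ι d with hedef
    set g : ℕ → Ordinal := fun n => f (e.symm n) with hgdef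
    have hg : ∀ n, g n < c.ord := fun n => by
      rw [← hlsub]; exact Ordinal.lt_lsub f _
    have hgcof : ∀ a : X, ∃ n, (a : Ordinal) ≤ g n := by
      intro a
      have ha : (a : Ordinal) < Ordinal.lsub f := by rw [hlsub]; exact a.2
      obtain ⟨i, hi⟩ := Ordinal.lt_lsub_iff.1 ha
      exact ⟨e i, by simpa [hgdef] using hi⟩
    set z : ℕ → Set X := fun n => {a : X | (a : Ordinal) ≤ g n} with hzdef
    have hzZ : ∀ n, z n ∈ Z := by
      intro n
      refine (hZ _).2 ⟨⟨Order.succ (g n), hlim.succ_lt (hg n)⟩, fun w hw => ?_⟩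
      exact Subtype.mk_lt_mk.2 (Order.lt_succ_iff.2 hw)
    set U : ℕ → Set ↥A := fun n => BSet A ∅ (z n) with hUdef
    have hUopen : ∀ n, (tau A Z).IsOpen (U n) :=
      fun n => TopologicalSpace.GenerateOpen.basic _
        ⟨∅, finite_empty, z n, hzZ n, empty_inter _, rfl⟩
    have hIopen := hP U hUopen
    have e0 : ↥A := ⟨∅, finite_empty⟩
    have he0 : (⟨∅, finite_empty⟩ : ↥A) ∈ ⋂ n, U n :=
      mem_iInter.2 fun n => ⟨empty_subset _, empty_inter _⟩
    obtain ⟨z', hz', _, hsub⟩ := tau_nbhd hZ0 hZu hIopen _ he0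
    obtain ⟨x, hx⟩ := (hZ z').1 hz'
    have hxz' : x ∉ z' := fun h => lt_irrefl x (hx x h)
    have hsx : (⟨{x}, finite_singleton x⟩ : ↥A) ∈ ⋂ n, U n := by
      apply hsub
      exact ⟨empty_subset _, by simp [singleton_inter_eq_empty.2 hxz']⟩
    obtain ⟨n, hn⟩ := hgcof x
    have := mem_iInter.1 hsx n
    have hxn : x ∈ z n := hn
    have : ({x} : Set X) ∩ z n = ∅ := this.2
    rw [singleton_inter_eq_empty] at this
    exact this hxn
  · -- ℵ₀ < cof → P-space
    intro hcof U hUopen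
    apply tau_open_of_nbhd
    intro y hy
    have h : ∀ n, ∃ z ∈ Z, (y : Set X) ∩ z = ∅ ∧ BSet A (y : Set X) z ⊆ U n :=
      fun n => tau_nbhd hZ0 hZu (hUopen n) y (mem_iInter.1 hy n)
    choose z hzZ hd hsub using h
    have hx : ∀ n, ∃ x : X, ∀ w ∈ z n, w < x := fun n => (hZ _).1 (hzZ n)
    choose x hx using hx
    have hb : (⨆ n, (x n : Ordinal)) < c.ord := by
      refine Ordinal.iSup_lt_ord_lift ?_ fun n => (x n).2
      simpa using hcof
    refine ⟨⋃ n, z n, (hZ _).2 ⟨⟨_, hb⟩, ?_⟩, ?_, ?_⟩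
    · rintro w hw
      obtain ⟨n, hn⟩ := mem_iUnion.1 hw
      have h1 : (w : Ordinal) < (x n : Ordinal) := hx n w hn
      have h2 : (x n : Ordinal) ≤ ⨆ n, (x n : Ordinal) :=
        le_ciSup (Ordinal.bddAbove_range _) n
      exact Subtype.mk_lt_mk.2 (h1.trans_le h2)
    · rw [inter_iUnion]
      simp [hd]
    · intro w hw
      refine mem_iInter.2 fun n => hsub n ⟨hw.1, ?_⟩
      have h2 : (w : Set X) ∩ z n ⊆ (w : Set X) ∩ ⋃ n, z n :=
        inter_subset_inter_right _ (subset_iUnion z n)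
      rw [hw.2] at h2
      exact subset_empty_iff.1 h2
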